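/- Let k ≥ 5 and let G be a transitive permutation group of degree n with the k-et property, where n > R(k-1, k-1) (the diagonal Ramsey number). Then G is 2-homogeneous, i.e., transitive on 2-subsets. -/

import Mathlib

open Finset

variable {Ω : Type*} [Fintype Ω] [DecidableEq Ω]

/-- `P` is a partition of the finite set `Ω`. -/
def IsPartition (P : Finset (Finset Ω)) : Prop :=
  (∀ p ∈ P, p.Nonempty) ∧
  (∀ p ∈ P, ∀ q ∈ P, p ≠ q → Disjoint p q) ∧
  (∀ x : Ω, ∃ p ∈ P, x ∈ p)

/-- `S` is a transversal of the partition `P`. -/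
def IsTransversal (S : Finset Ω) (P : Finset (Finset Ω)) : Prop :=
  ∀ p ∈ P, (S ∩ p).card = 1

/-- The `k`-set `S` witnesses the `k`-existential transversal property for `G`. -/
def Witnesses (G : Subgroup (Equiv.Perm Ω)) (k : ℕ) (S : Finset Ω) : Prop :=
  S.card = k ∧ ∀ P : Finset (Finset Ω), IsPartition P → P.card = k →
    ∃ g ∈ G, IsTransversal (S.image ⇑g) P

/-- Any `(k-1)`-set is contained in some `G`-image of the witnessing set `S`. -/
lemma force_mem (G : Subgroup (Equiv.Perm Ω)) (k : ℕ) (S : Finset Ω)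
    (hW : Witnesses G k S) (hk : 1 ≤ k) (T : Finset Ω) (hT : T.card = k - 1) :
    ∃ g ∈ G, T ⊆ S.image ⇑g := by
  obtain ⟨hScard, hS⟩ := hW
  have hn : k ≤ Fintype.card Ω := by
    calc k = S.card := hScard.symm
    _ ≤ Fintype.card Ω := by simpa using Finset.card_le_card (Finset.subset_univ S)
  have hTne : T ≠ Finset.univ := by
    intro h
    have : Fintype.card Ω = k - 1 := by rw [← Finset.card_univ, ← h, hT]
    omega
  have hrest : (Finset.univ \ T).Nonempty := by
    rw [Finset.sdiff_nonempty]
    intro h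
    exact hTne (Finset.univ_subset_iff.mp h)
  set P : Finset (Finset Ω) :=
    insert (Finset.univ \ T) (T.image fun t => ({t} : Finset Ω)) with hP
  have hnotmem : (Finset.univ \ T) ∉ T.image (fun t => ({t} : Finset Ω)) := by
    intro h
    obtain ⟨t, ht, heq⟩ := Finset.mem_image.mp h
    have : t ∈ Finset.univ \ T := by rw [← heq]; exact Finset.mem_singleton_self t
    exact (Finset.mem_sdiff.mp this).2 ht
  have hPcard : P.card = k := by
    rw [hP, Finset.card_insert_of_notMem hnotmem,
        Finset.card_image_of_injective _ Finset.singleton_injective, hT]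
    omega
  have hPart : IsPartition P := by
    refine ⟨?_, ?_, ?_⟩
    · intro p hp
      rcases Finset.mem_insert.mp hp with h | h
      · rw [h]; exact hrest
      · obtain ⟨t, _, rfl⟩ := Finset.mem_image.mp h
        exact Finset.singleton_nonempty t
    · intro p hp q hq hpq
      rcases Finset.mem_insert.mp hp with h | h <;>
        rcases Finset.mem_insert.mp hq with h' | h'
      · exact absurd (h.trans h'.symm) hpq
      · obtain ⟨t, ht, rfl⟩ := Finset.mem_image.mp h'
        subst h
        simp [Finset.disjoint_singleton_right, ht]
      · obtain ⟨t, ht, rfl⟩ := Finset.mem_image.mp h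
        subst h'
        simp [Finset.disjoint_singleton_left, ht]
      · obtain ⟨t, ht, rfl⟩ := Finset.mem_image.mp h
        obtain ⟨t', ht', rfl⟩ := Finset.mem_image.mp h'
        simp only [Finset.disjoint_singleton_left, Finset.mem_singleton]
        intro h; exact hpq (by rw [h])
    · intro x
      by_cases hx : x ∈ T
      · exact ⟨{x}, Finset.mem_insert_of_mem (Finset.mem_image_of_mem _ hx),
          Finset.mem_singleton_self x⟩
      · exact ⟨Finset.univ \ T, Finset.mem_insert_self _ _,
          Finset.mem_sdiff.mpr ⟨Finset.mem_univ x, hx⟩⟩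
  obtain ⟨g, hg, htr⟩ := hS P hPart hPcard
  refine ⟨g, hg, ?_⟩
  intro t ht
  have h1 : ((S.image ⇑g) ∩ {t}).card = 1 :=
    htr {t} (Finset.mem_insert_of_mem (Finset.mem_image_of_mem _ ht))
  obtain ⟨a, ha⟩ := Finset.card_eq_one.mp h1
  have haa : a ∈ (S.image ⇑g) ∩ {t} := ha ▸ Finset.mem_singleton_self a
  obtain ⟨haS, hat⟩ := Finset.mem_inter.mp haa
  rwa [Finset.mem_singleton.mp hat] at haS

/-- A nonempty irreflexive symmetric relation invariant under a transitive group on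
at least 5 points has two disjoint edges. -/
lemma two_disjoint_edges (G : Subgroup (Equiv.Perm Ω))
    (htrans : ∀ a b : Ω, ∃ g ∈ G, g a = b)
    (E : Ω → Ω → Prop)
    (hsymm : ∀ x y, E x y → E y x)
    (hinv : ∀ g ∈ G, ∀ x y, E x y → E (g x) (g y))
    (hirr : ∀ x, ¬ E x x)
    (hne : ∃ x y, E x y)
    (hcard : 5 ≤ Fintype.card Ω) :
    ∃ x y z w, E x y ∧ E z w ∧ x ≠ z ∧ x ≠ w ∧ y ≠ z ∧ y ≠ w := by
  by_contra hcon
  push_neg at hcon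
  have hmeet : ∀ x y z w, E x y → E z w → x = z ∨ x = w ∨ y = z ∨ y = w := by
    intro x y z w h1 h2
    by_cases hxz : x = z
    · exact Or.inl hxz
    by_cases hxw : x = w
    · exact Or.inr (Or.inl hxw)
    by_cases hyz : y = z
    · exact Or.inr (Or.inr (Or.inl hyz))
    exact Or.inr (Or.inr (Or.inr (hcon x y z w h1 h2 hxz hxw hyz)))
  obtain ⟨x, y, hxy⟩ := hne
  have hxyne : x ≠ y := fun h => hirr y (h ▸ hxy)
  have hnbr : ∀ v : Ω, ∃ w, E v w := by
    intro v
    obtain ⟨g, hg, hgx⟩ := htrans x v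
    exact ⟨g y, hgx ▸ hinv g hg x y hxy⟩
  have h3 : 3 ≤ (Finset.univ \ ({x, y} : Finset Ω)).card := by
    have hsd := Finset.card_sdiff_of_subset (Finset.subset_univ ({x, y} : Finset Ω))
    have h2 : ({x, y} : Finset Ω).card = 2 := Finset.card_pair hxyne
    rw [Finset.card_univ] at hsd
    omega
  obtain ⟨t, hts, htc⟩ := Finset.exists_subset_card_eq h3
  obtain ⟨z₁, z₂, z₃, h12, h13, h23, rfl⟩ := Finset.card_eq_three.mp htc
  have hz : ∀ z ∈ ({z₁, z₂, z₃} : Finset Ω), z ≠ x ∧ z ≠ y := by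
    intro z hzm
    have := hts hzm
    rw [Finset.mem_sdiff] at this
    simp only [Finset.mem_insert, Finset.mem_singleton] at this
    push_neg at this
    exact this.2
  have hz1 := hz z₁ (by simp)
  have hz2 := hz z₂ (by simp)
  have hz3 := hz z₃ (by simp)
  obtain ⟨w₁, hw₁⟩ := hnbr z₁
  obtain ⟨w₂, hw₂⟩ := hnbr z₂
  obtain ⟨w₃, hw₃⟩ := hnbr z₃
  have hwxy : ∀ z w, z ≠ x → z ≠ y → E z w → w = x ∨ w = y := by
    intro z w hzx hzy hE
    rcases hmeet z w x y hE hxy with h | h | h | h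
    · exact absurd h hzx
    · exact absurd h hzy
    · exact Or.inl h
    · exact Or.inr h
  have hw₁xy := hwxy z₁ w₁ hz1.1 hz1.2 hw₁
  have hw₂xy := hwxy z₂ w₂ hz2.1 hz2.2 hw₂
  have hw₃xy := hwxy z₃ w₃ hz3.1 hz3.2 hw₃
  -- the three neighbours coincide
  have hsame : ∀ zi wi zj wj, zi ≠ zj → zi ≠ x → zi ≠ y → zj ≠ x → zj ≠ y →
      (wi = x ∨ wi = y) → (wj = x ∨ wj = y) → E zi wi → E zj wj → wi = wj := by
    intro zi wi zj wj hij hix hiy hjx hjy hwi hwj hEi hEj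
    rcases hmeet zi wi zj wj hEi hEj with h | h | h | h
    · exact absurd h hij
    · rcases hwj with h' | h' <;> rw [h'] at h
      · exact absurd h hix
      · exact absurd h hiy
    · rcases hwi with h' | h' <;> rw [h'] at h
      · exact absurd h.symm hjx
      · exact absurd h.symm hjy
    · exact h
  have he12 : w₁ = w₂ :=
    hsame z₁ w₁ z₂ w₂ h12 hz1.1 hz1.2 hz2.1 hz2.2 hw₁xy hw₂xy hw₁ hw₂
  have he13 : w₁ = w₃ :=
    hsame z₁ w₁ z₃ w₃ h13 hz1.1 hz1.2 hz3.1 hz3.2 hw₁xy hw₃xy hw₁ hw₃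
  set c₀ := w₁ with hc₀
  have hE1 : E z₁ c₀ := hw₁
  have hE2 : E z₂ c₀ := he12 ▸ hw₂
  have hE3 : E z₃ c₀ := he13 ▸ hw₃
  have hc₀x : c₀ = x ∨ c₀ = y := hw₁xy
  have hz1c : z₁ ≠ c₀ := by
    rcases hc₀x with h | h <;> rw [h]
    · exact hz1.1
    · exact hz1.2
  obtain ⟨g, hg, hgc⟩ := htrans c₀ z₁
  have hEg2 : E z₁ (g z₂) := by
    have := hinv g hg c₀ z₂ (hsymm _ _ hE2)
    rwa [hgc] at this
  have hEg3 : E z₁ (g z₃) := by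
    have := hinv g hg c₀ z₃ (hsymm _ _ hE3)
    rwa [hgc] at this
  have key : ∀ u, E z₁ u → u = c₀ ∨ u = z₂ := by
    intro u hu
    rcases hmeet z₁ u z₂ c₀ hu hE2 with h | h | h | h
    · exact absurd h h12
    · exact absurd h hz1c
    · exact Or.inr h
    · exact Or.inl h
  have key' : ∀ u, E z₁ u → u = c₀ ∨ u = z₃ := by
    intro u hu
    rcases hmeet z₁ u z₃ c₀ hu hE3 with h | h | h | h
    · exact absurd h h13
    · exact absurd h hz1c
    · exact Or.inr h
    · exact Or.inl h
  have hg2 : g z₂ = c₀ := by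
    rcases key (g z₂) hEg2 with h | h
    · exact h
    · rcases key' (g z₂) hEg2 with h' | h'
      · exact h'
      · exact absurd (h.symm.trans h') h23
  have hg3 : g z₃ = c₀ := by
    rcases key (g z₃) hEg3 with h | h
    · exact h
    · rcases key' (g z₃) hEg3 with h' | h'
      · exact h'
      · exact absurd (h.symm.trans h') h23
  exact h23 (g.injective (hg2.trans hg3.symm))

/-- Let `k ≥ 5` and let `G` be transitive with the `k`-et property on a set whose
size exceeds the diagonal Ramsey number `R(k-1, k-1)` (expressed by the Ramsey
property for `(k-1)`-sets). Then `G` is `2`-homogeneous. -/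
theorem kET_implies_two_homogeneous (G : Subgroup (Equiv.Perm Ω)) (k : ℕ)
    (hk : 5 ≤ k)
    (htrans : ∀ a b : Ω, ∃ g ∈ G, g a = b)
    (hRamsey : ∀ c : Ω → Ω → Bool, (∀ x y, c x y = c y x) →
      ∃ (A : Finset Ω) (b : Bool), A.card = k - 1 ∧
        ∀ x ∈ A, ∀ y ∈ A, x ≠ y → c x y = b)
    (het : ∃ S : Finset Ω, Witnesses G k S) :
    ∀ A B : Finset Ω, A.card = 2 → B.card = 2 → ∃ g ∈ G, A.image ⇑g = B := by
  classical
  intro A B hA hB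
  by_contra hAB
  push_neg at hAB
  obtain ⟨a₁, a₂, ha12, rfl⟩ := Finset.card_eq_two.mp hA
  obtain ⟨b₁, b₂, hb12, rfl⟩ := Finset.card_eq_two.mp hB
  obtain ⟨S, hW⟩ := het
  have hScard := hW.1
  have hn : k ≤ Fintype.card Ω := by
    calc k = S.card := hScard.symm
    _ ≤ Fintype.card Ω := by simpa using Finset.card_le_card (Finset.subset_univ S)
  -- the colouring by the orbit of {a₁, a₂}
  set c : Ω → Ω → Bool :=
    fun x y => decide (∃ g ∈ G, ({a₁, a₂} : Finset Ω).image ⇑g = {x, y}) with hcdef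
  have hcsymm : ∀ x y, c x y = c y x := by
    intro x y
    simp only [hcdef]
    exact decide_eq_decide.mpr (by rw [Finset.pair_comm x y])
  have hcinv : ∀ g ∈ G, ∀ x y, c (g x) (g y) = c x y := by
    intro g hg x y
    simp only [hcdef]
    apply decide_eq_decide.mpr
    constructor
    · rintro ⟨h, hh, him⟩
      refine ⟨g⁻¹ * h, mul_mem (inv_mem hg) hh, ?_⟩
      rw [show ⇑(g⁻¹ * h) = ⇑g⁻¹ ∘ ⇑h from rfl, ← Finset.image_image, him]
      simp
    · rintro ⟨h, hh, him⟩
      refine ⟨g * h, mul_mem hg hh, ?_⟩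
      rw [show ⇑(g * h) = ⇑g ∘ ⇑h from rfl, ← Finset.image_image, him]
      simp
  have hctrue : c a₁ a₂ = true := by
    simp only [hcdef, decide_eq_true_eq]
    exact ⟨1, one_mem G, by simp⟩
  have hcfalse : c b₁ b₂ = false := by
    simp only [hcdef, decide_eq_false_iff_not]
    rintro ⟨g, hg, him⟩
    exact hAB g hg him
  obtain ⟨M, b, hMcard, hMmono⟩ := hRamsey c hcsymm
  -- the "other colour" graph
  set E : Ω → Ω → Prop := fun u v => u ≠ v ∧ c u v = !b with hEdef
  have hEsymm : ∀ u v, E u v → E v u := by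
    rintro u v ⟨h1, h2⟩
    exact ⟨h1.symm, (hcsymm v u).trans h2⟩
  have hEinv : ∀ g ∈ G, ∀ u v, E u v → E (g u) (g v) := by
    rintro g hg u v ⟨h1, h2⟩
    exact ⟨fun h => h1 (g.injective h), (hcinv g hg u v).trans h2⟩
  have hEirr : ∀ u, ¬ E u u := fun u h => h.1 rfl
  have hEne : ∃ u v, E u v := by
    cases b
    · exact ⟨a₁, a₂, ha12, by rw [hctrue]; rfl⟩
    · exact ⟨b₁, b₂, hb12, by rw [hcfalse]; rfl⟩
  -- the star property for images of S
  obtain ⟨g₁, hg₁, hM⟩ := force_mem G k S hW (by omega) M hMcard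
  have hstar : ∀ u ∈ S.image ⇑g₁, ∀ v ∈ S.image ⇑g₁, ∀ w ∈ S.image ⇑g₁,
      ∀ z ∈ S.image ⇑g₁, E u v → E w z → u = w ∨ u = z ∨ v = w ∨ v = z := by
    intro u hu v hv w hw z hz huv hwz
    by_contra hcc
    push_neg at hcc
    obtain ⟨huw, huz, hvw, hvz⟩ := hcc
    have hout : ∀ p ∈ S.image ⇑g₁, ∀ q ∈ S.image ⇑g₁, p ∉ M → q ∉ M → p = q := by
      intro p hp q hq hpM hqM
      by_contra hpq
      have hsub : ({p, q} : Finset Ω) ⊆ S.image ⇑g₁ \ M := by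
        intro r hr
        rcases Finset.mem_insert.mp hr with h | h
        · subst h; exact Finset.mem_sdiff.mpr ⟨hp, hpM⟩
        · rw [Finset.mem_singleton.mp h]; exact Finset.mem_sdiff.mpr ⟨hq, hqM⟩
      have h2le : 2 ≤ (S.image ⇑g₁ \ M).card := by
        calc 2 = ({p, q} : Finset Ω).card := (Finset.card_pair hpq).symm
        _ ≤ _ := Finset.card_le_card hsub
      have hsd := Finset.card_sdiff_of_subset hM
      have himc : (S.image ⇑g₁).card = k := by
        rw [Finset.card_image_of_injective _ g₁.injective, hScard]
      omega
    have hmono : ∀ p ∈ M, ∀ q ∈ M, p ≠ q → ¬ E p q := by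
      intro p hp q hq hpq hE
      have := hMmono p hp q hq hpq
      rw [hE.2] at this
      cases b <;> simp at this
    -- at most one of u v w z is outside M, so one full edge lies in M
    by_cases huM : u ∈ M
    · by_cases hvM : v ∈ M
      · exact hmono u huM v hvM huv.1 huv
      · by_cases hwM : w ∈ M
        · by_cases hzM : z ∈ M
          · exact hmono w hwM z hzM hwz.1 hwz
          · exact hvz (hout v hv z hz hvM hzM)
        · exact hvw (hout v hv w hw hvM hwM)
    · by_cases hvM : v ∈ M
      · by_cases hwM : w ∈ M
        · by_cases hzM : z ∈ M
          · exact hmono w hwM z hzM hwz.1 hwz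
          · exact huz (hout u hu z hz huM hzM)
        · exact huw (hout u hu w hw huM hwM)
      · exact huv.1 (hout u hu v hv huM hvM)
  -- two disjoint E-edges
  obtain ⟨x, y, z, w, hExy, hEzw, hxz, hxw, hyz, hyw⟩ :=
    two_disjoint_edges G htrans E hEsymm hEinv hEirr hEne (by omega)
  have hxy : x ≠ y := hExy.1
  have hzw : z ≠ w := hEzw.1
  -- put the four points into a (k-1)-set and force it into an image of S
  have hT4 : ({x, y, z, w} : Finset Ω).card ≤ 4 := by
    apply le_trans (Finset.card_insert_le _ _)
    apply Nat.succ_le_succ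
    apply le_trans (Finset.card_insert_le _ _)
    apply Nat.succ_le_succ
    exact Finset.card_insert_le _ _
  obtain ⟨T, hT4sub, _, hTcard⟩ :=
    Finset.exists_subsuperset_card_eq (Finset.subset_univ ({x, y, z, w} : Finset Ω))
      (hT4.trans (show (4:ℕ) ≤ k - 1 by omega)) (by rw [Finset.card_univ]; omega)
  obtain ⟨g₂, hg₂, hTsub⟩ := force_mem G k S hW (by omega) T hTcard
  have hmem : ∀ p ∈ ({x, y, z, w} : Finset Ω), p ∈ S.image ⇑g₂ :=
    fun p hp => hTsub (hT4sub hp)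
  -- transport into the image of g₁ via φ = g₁ * g₂⁻¹
  set φ : Equiv.Perm Ω := g₁ * g₂⁻¹ with hφ
  have hφG : φ ∈ G := mul_mem hg₁ (inv_mem hg₂)
  have hφmap : ∀ p ∈ S.image ⇑g₂, φ p ∈ S.image ⇑g₁ := by
    intro p hp
    obtain ⟨s, hs, rfl⟩ := Finset.mem_image.mp hp
    have : φ (g₂ s) = g₁ s := by
      simp [hφ, Equiv.Perm.mul_apply]
    rw [this]
    exact Finset.mem_image_of_mem _ hs
  have h1 := hφmap x (hmem x (by simp))
  have h2 := hφmap y (hmem y (by simp))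
  have h3 := hφmap z (hmem z (by simp))
  have h4 := hφmap w (hmem w (by simp))
  have hE1 : E (φ x) (φ y) := hEinv φ hφG x y hExy
  have hE2 : E (φ z) (φ w) := hEinv φ hφG z w hEzw
  rcases hstar (φ x) h1 (φ y) h2 (φ z) h3 (φ w) h4 hE1 hE2 with h | h | h | h
  · exact hxz (φ.injective h)
  · exact hxw (φ.injective h)
  · exact hyz (φ.injective h)
  · exact hyw (φ.injective h)
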